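/- Let (E,F) be a triangulation datum with E nonempty. Then |Adm(E,F,4)| ≤ (|Adm(E,F,3)| − 1)·(2^{|E|−1} + 1) + 1. -/

import Mathlib

/-- A colouring `θ : E → ℚ` is admissible for the triangulation datum `(E, F)`
and the integer `r` if every edge colour lies in `{0, 1/2, 1, …, (r-2)/2}` and
every triple of `F` satisfies the parity condition, the triangle inequalities,
and the upper bound constraint. -/
def IsAdmissible {E : Type*} (F : Multiset (E × E × E)) (r : ℕ) (θ : E → ℚ) : Prop :=
  (∀ e : E, ∃ k : ℕ, k ≤ r - 2 ∧ θ e = (k : ℚ) / 2) ∧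
  ∀ t ∈ F,
    (∃ z : ℤ, θ t.1 + θ t.2.1 + θ t.2.2 = (z : ℚ)) ∧
    θ t.1 ≤ θ t.2.1 + θ t.2.2 ∧
    θ t.2.1 ≤ θ t.1 + θ t.2.2 ∧
    θ t.2.2 ≤ θ t.1 + θ t.2.1 ∧
    θ t.1 + θ t.2.1 + θ t.2.2 ≤ (r : ℚ) - 2

/-- The set of admissible colourings of `(E, F)` for the integer `r`. -/
def Adm {E : Type*} (F : Multiset (E × E × E)) (r : ℕ) : Set (E → ℚ) :=
  {θ | IsAdmissible F r θ}


/-- No integer equals `m + 1/2`. -/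
lemma half_not_int (z m : ℤ) (h : (z : ℚ) = (m : ℚ) + 1/2) : False := by
  have h2 : ((2*z : ℤ) : ℚ) = ((2*m+1 : ℤ) : ℚ) := by push_cast; linarith
  have := Int.cast_injective (α := ℚ) h2
  omega

/-- The half-integer part of a colour in `{0, 1/2, 1}`. -/
def halfPart (q : ℚ) : ℚ := if q = 1/2 then 1/2 else 0

lemma tri3 (a b c : ℚ) (ha : a = 0 ∨ a = 1/2 ∨ a = 1) (hb : b = 0 ∨ b = 1/2 ∨ b = 1)
    (hc : c = 0 ∨ c = 1/2 ∨ c = 1) (hpar : ∃ z : ℤ, a + b + c = (z : ℚ)) :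
    (∃ z : ℤ, halfPart a + halfPart b + halfPart c = (z : ℚ)) ∧
    halfPart a ≤ halfPart b + halfPart c ∧
    halfPart b ≤ halfPart a + halfPart c ∧
    halfPart c ≤ halfPart a + halfPart b ∧
    halfPart a + halfPart b + halfPart c ≤ ((3 : ℕ) : ℚ) - 2 := by
  obtain ⟨z, hz⟩ := hpar
  rcases ha with rfl | rfl | rfl <;> rcases hb with rfl | rfl | rfl <;>
      rcases hc with rfl | rfl | rfl <;>
    first
      | ((refine ⟨⟨0, ?_⟩, ?_, ?_, ?_, ?_⟩ <;> norm_num [halfPart]); done)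
      | ((refine ⟨⟨1, ?_⟩, ?_, ?_, ?_, ?_⟩ <;> norm_num [halfPart]); done)
      | (exfalso; refine half_not_int z 0 ?_; linarith)
      | (exfalso; refine half_not_int z 1 ?_; linarith)
      | (exfalso; refine half_not_int z 2 ?_; linarith)

lemma tri0 (a b c : ℚ) (ha : a = 0 ∨ a = 1) (hb : b = 0 ∨ b = 1) (hc : c = 0 ∨ c = 1)
    (h1 : a ≤ b + c) (h4 : a + b + c ≤ ((4 : ℕ) : ℚ) - 2)
    (h2 : b ≤ a + c) (h3 : c ≤ a + b) :
    (∃ z : ℤ, a/2 + b/2 + c/2 = (z : ℚ)) ∧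
    a/2 ≤ b/2 + c/2 ∧ b/2 ≤ a/2 + c/2 ∧ c/2 ≤ a/2 + b/2 ∧
    a/2 + b/2 + c/2 ≤ ((3 : ℕ) : ℚ) - 2 := by
  have h4' : a + b + c ≤ 2 := by norm_num at h4; linarith
  rcases ha with rfl | rfl <;> rcases hb with rfl | rfl <;> rcases hc with rfl | rfl <;>
    first
      | ((refine ⟨⟨0, ?_⟩, ?_, ?_, ?_, ?_⟩ <;> norm_num); done)
      | ((refine ⟨⟨1, ?_⟩, ?_, ?_, ?_, ?_⟩ <;> norm_num); done)
      | linarith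

lemma val4 {q : ℚ} (h : ∃ k : ℕ, k ≤ 4 - 2 ∧ q = (k : ℚ) / 2) :
    q = 0 ∨ q = 1/2 ∨ q = 1 := by
  obtain ⟨k, hk, rfl⟩ := h
  interval_cases k <;> norm_num



/-- `|Adm(E,F,4)| ≤ (|Adm(E,F,3)| − 1)·(2^{|E|−1} + 1) + 1` for a triangulation
datum with nonempty edge set. -/

theorem adm_four_card_le_of_adm_three {E : Type*} [Fintype E] [Nonempty E]
    (F : Multiset (E × E × E)) :
    (Adm F 4).ncard ≤
      ((Adm F 3).ncard - 1) * (2 ^ (Fintype.card E - 1) + 1) + 1 := by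
  classical
  have hfin : ∀ r : ℕ, (Adm F r).Finite := by
    intro r
    have hsub : Adm F r ⊆
        Set.pi Set.univ (fun _ : E => (fun k : ℕ => (k : ℚ) / 2) '' Set.Iic (r - 2)) := by
      intro θ hθ e _
      obtain ⟨k, hk, h⟩ := hθ.1 e
      exact ⟨k, hk, h.symm⟩
    exact (Set.Finite.pi (fun _ => (Set.finite_Iic _).image _)).subset hsub
  set A4 := (hfin 4).toFinset with hA4
  set A3 := (hfin 3).toFinset with hA3
  have hmem4 : ∀ θ, θ ∈ A4 ↔ θ ∈ Adm F 4 := fun θ => (hfin 4).mem_toFinset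
  have hmem3 : ∀ θ, θ ∈ A3 ↔ θ ∈ Adm F 3 := fun θ => (hfin 3).mem_toFinset
  -- the half-part map
  set G : (E → ℚ) → (E → ℚ) := fun θ e => halfPart (θ e) with hG
  -- values of an Adm-4 colouring
  have hval : ∀ θ ∈ Adm F 4, ∀ e, θ e = 0 ∨ θ e = 1/2 ∨ θ e = 1 :=
    fun θ hθ e => val4 (hθ.1 e)
  -- G maps Adm 4 into Adm 3
  have hGadm : ∀ θ ∈ Adm F 4, G θ ∈ Adm F 3 := by
    intro θ hθ
    constructor
    · intro e
      by_cases h : θ e = 1/2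
      · refine ⟨1, by norm_num, ?_⟩
        show halfPart (θ e) = _
        unfold halfPart
        rw [if_pos h]
        norm_num
      · refine ⟨0, by norm_num, ?_⟩
        show halfPart (θ e) = _
        unfold halfPart
        rw [if_neg h]
        norm_num
    · intro t ht
      exact tri3 _ _ _ (hval θ hθ t.1) (hval θ hθ t.2.1) (hval θ hθ t.2.2) (hθ.2 t ht).1
  -- zero colouring is admissible for 3
  have hzero3 : (0 : E → ℚ) ∈ Adm F 3 := by
    refine ⟨fun e => ⟨0, by norm_num, by simp⟩, fun t _ => ⟨⟨0, by simp⟩, ?_, ?_, ?_, ?_⟩⟩ <;>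
      norm_num
  have h0mem : (0 : E → ℚ) ∈ A3 := (hmem3 _).mpr hzero3
  -- counting fibers of G
  have hcardsum : A4.card = ∑ y ∈ A3, (A4.filter (fun θ => G θ = y)).card := by
    refine Finset.card_eq_sum_card_fiberwise ?_
    intro θ hθ
    exact (hmem3 _).mpr (hGadm θ ((hmem4 _).mp hθ))
  -- nonzero fibers are small
  have hfib : ∀ y ∈ A3.erase 0,
      (A4.filter (fun θ => G θ = y)).card ≤ 2 ^ (Fintype.card E - 1) := by
    intro y hy
    have hy0 : y ≠ 0 := (Finset.mem_erase.mp hy).1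
    obtain ⟨e0, he0⟩ : ∃ e, y e ≠ 0 := by
      by_contra h
      push_neg at h
      exact hy0 (funext h)
    have hcard : Fintype.card {e : E // y e = 0} ≤ Fintype.card E - 1 :=
      Nat.le_sub_one_of_lt (Fintype.card_subtype_lt (x := e0) he0)
    calc (A4.filter (fun θ => G θ = y)).card
        ≤ (Finset.univ : Finset ({e : E // y e = 0} → Bool)).card := by
          refine Finset.card_le_card_of_injOn
            (fun θ => fun e : {e : E // y e = 0} => decide (θ e.1 = 1))
            (fun _ _ => Finset.mem_univ _) ?_
          intro θ1 h1 θ2 h2 heq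
          simp only [Finset.coe_filter, Set.mem_setOf_eq, hmem4] at h1 h2
          funext e
          by_cases hye : y e = 0
          · have hd := congrFun heq ⟨e, hye⟩
            simp only [decide_eq_decide] at hd
            have hv1 : θ1 e = 0 ∨ θ1 e = 1 := by
              rcases hval θ1 h1.1 e with h | h | h
              · exact Or.inl h
              · exfalso
                have hc := congrFun h1.2 e
                simp only [hG] at hc
                unfold halfPart at hc
                rw [if_pos h] at hc
                rw [← hc] at hye
                norm_num at hye
              · exact Or.inr h
            have hv2 : θ2 e = 0 ∨ θ2 e = 1 := by
              rcases hval θ2 h2.1 e with h | h | h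
              · exact Or.inl h
              · exfalso
                have hc := congrFun h2.2 e
                simp only [hG] at hc
                unfold halfPart at hc
                rw [if_pos h] at hc
                rw [← hc] at hye
                norm_num at hye
              · exact Or.inr h
            rcases hv1 with h | h <;> rcases hv2 with h' | h' <;> rw [h, h'] <;>
              simp [h, h'] at hd
          · have hh1 : θ1 e = 1/2 := by
              have hc := congrFun h1.2 e
              by_contra hne
              simp only [hG] at hc
              unfold halfPart at hc
              rw [if_neg hne] at hc
              exact hye hc.symm
            have hh2 : θ2 e = 1/2 := by
              have hc := congrFun h2.2 e
              by_contra hne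
              simp only [hG] at hc
              unfold halfPart at hc
              rw [if_neg hne] at hc
              exact hye hc.symm
            rw [hh1, hh2]
      _ = 2 ^ Fintype.card {e : E // y e = 0} := by
          simp [Fintype.card_fun]
      _ ≤ 2 ^ (Fintype.card E - 1) := Nat.pow_le_pow_right (by norm_num) hcard
  -- the zero fiber injects into Adm 3
  have hfib0 : (A4.filter (fun θ => G θ = 0)).card ≤ A3.card := by
    refine Finset.card_le_card_of_injOn (fun θ => fun e => θ e / 2) ?_ ?_
    · intro θ hθ
      simp only [Finset.mem_coe, Finset.mem_filter, hmem4] at hθ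
      obtain ⟨hθ4, hθ0⟩ := hθ
      have hv : ∀ e, θ e = 0 ∨ θ e = 1 := by
        intro e
        rcases hval θ hθ4 e with h | h | h
        · exact Or.inl h
        · exfalso
          have hc := congrFun hθ0 e
          simp only [hG] at hc
          unfold halfPart at hc
          rw [if_pos h] at hc
          have : (0 : E → ℚ) e = 0 := rfl
          rw [this] at hc
          norm_num at hc
        · exact Or.inr h
      refine (hmem3 _).mpr ⟨?_, ?_⟩
      · intro e
        rcases hv e with h | h
        · exact ⟨0, by norm_num, by show θ e / 2 = _; rw [h]; norm_num⟩
        · exact ⟨1, by norm_num, by show θ e / 2 = _; rw [h]; norm_num⟩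
      · intro t ht
        obtain ⟨_, ht1, ht2, ht3, ht4⟩ := hθ4.2 t ht
        exact tri0 _ _ _ (hv t.1) (hv t.2.1) (hv t.2.2) ht1 ht4 ht2 ht3
    · intro θ1 _ θ2 _ heq
      funext e
      have := congrFun heq e
      simp only at this
      linarith
  -- assemble
  have hsplit : ∑ y ∈ A3.erase 0, (A4.filter (fun θ => G θ = y)).card
      + (A4.filter (fun θ => G θ = 0)).card
      = ∑ y ∈ A3, (A4.filter (fun θ => G θ = y)).card :=
    Finset.sum_erase_add A3 _ h0mem
  have hbound : ∑ y ∈ A3.erase 0, (A4.filter (fun θ => G θ = y)).card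
      ≤ (A3.card - 1) * 2 ^ (Fintype.card E - 1) := by
    calc ∑ y ∈ A3.erase 0, (A4.filter (fun θ => G θ = y)).card
        ≤ (A3.erase 0).card * 2 ^ (Fintype.card E - 1) := by
          simpa using Finset.sum_le_card_nsmul _ _ _ hfib
      _ = (A3.card - 1) * 2 ^ (Fintype.card E - 1) := by
          rw [Finset.card_erase_of_mem h0mem]
  have hncard4 : (Adm F 4).ncard = A4.card := Set.ncard_eq_toFinset_card _ (hfin 4)
  have hncard3 : (Adm F 3).ncard = A3.card := Set.ncard_eq_toFinset_card _ (hfin 3)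
  rw [hncard4, hncard3]
  have hA3pos : 1 ≤ A3.card := Finset.card_pos.mpr ⟨0, h0mem⟩
  obtain ⟨b, hb⟩ : ∃ b, A3.card = b + 1 := ⟨A3.card - 1, by omega⟩
  have htot : A4.card ≤ (A3.card - 1) * 2 ^ (Fintype.card E - 1) + A3.card := by
    rw [hcardsum, ← hsplit]
    omega
  rw [hb] at htot ⊢
  simp only [Nat.add_sub_cancel] at htot ⊢
  have hms : b * (2 ^ (Fintype.card E - 1) + 1) = b * 2 ^ (Fintype.card E - 1) + b := by ring
  omega
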